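/- (Nonvanishing of the third-order denominator.) Let g > 0 and for k ∈ ℝ² set ω(k) = √(g‖k‖). If k₁, k₂, k₃ ∈ ℝ² are all nonzero and k₁ + k₂ + k₃ = 0, then the denominator d₁₂₃ = (ω(k₁)+ω(k₂)+ω(k₃))(ω(k₁)+ω(k₂)−ω(k₃))(ω(k₁)−ω(k₂)+ω(k₃))(ω(k₁)−ω(k₂)−ω(k₃)) is strictly negative; in particular d₁₂₃ ≠ 0. -/

import Mathlib

/-- Euclidean norm on ℝ². -/
noncomputable def norm2 (k : ℝ × ℝ) : ℝ := Real.sqrt (k.1 ^ 2 + k.2 ^ 2)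

/-- Deep-water dispersion relation ω(k) = √(g‖k‖). -/
noncomputable def omg (g : ℝ) (k : ℝ × ℝ) : ℝ := Real.sqrt (g * norm2 k)

lemma norm2_eq (k : ℝ × ℝ) : norm2 k = ‖(⟨k.1, k.2⟩ : ℂ)‖ := by
  rw [norm2, Complex.norm_def, Complex.normSq_mk]; ring_nf

lemma norm2_nonneg (k : ℝ × ℝ) : 0 ≤ norm2 k := Real.sqrt_nonneg _

lemma norm2_pos (k : ℝ × ℝ) (hk : k ≠ 0) : 0 < norm2 k := by
  rw [norm2, Real.sqrt_pos]
  rcases eq_or_ne k.1 0 with h | h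
  · have h2 : k.2 ≠ 0 := fun h2 => hk (Prod.ext h h2)
    have hp : 0 < k.2 ^ 2 := by positivity
    nlinarith [sq_nonneg k.1]
  · have hp : 0 < k.1 ^ 2 := by positivity
    nlinarith [sq_nonneg k.2]

lemma norm2_neg (k : ℝ × ℝ) : norm2 (-k) = norm2 k := by
  simp [norm2]

lemma norm2_triangle (p q : ℝ × ℝ) : norm2 (p + q) ≤ norm2 p + norm2 q := by
  rw [norm2_eq, norm2_eq, norm2_eq]
  have h : (⟨(p + q).1, (p + q).2⟩ : ℂ) = ⟨p.1, p.2⟩ + ⟨q.1, q.2⟩ := by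
    apply Complex.ext <;> simp
  rw [h]
  exact norm_add_le _ _

/-- Nonvanishing (in fact strict negativity) of the third-order denominator d₁₂₃. -/
theorem d123_neg (g : ℝ) (hg : 0 < g) (k₁ k₂ k₃ : ℝ × ℝ)
    (h₁ : k₁ ≠ 0) (h₂ : k₂ ≠ 0) (h₃ : k₃ ≠ 0) (hsum : k₁ + k₂ + k₃ = 0) :
    (omg g k₁ + omg g k₂ + omg g k₃) * (omg g k₁ + omg g k₂ - omg g k₃) *
      (omg g k₁ - omg g k₂ + omg g k₃) * (omg g k₁ - omg g k₂ - omg g k₃) < 0 := by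
  set a := norm2 k₁ with ha'
  set b := norm2 k₂ with hb'
  set c := norm2 k₃ with hc'
  have ha : 0 < a := norm2_pos _ h₁
  have hb : 0 < b := norm2_pos _ h₂
  have hc : 0 < c := norm2_pos _ h₃
  have e3 : k₃ = -(k₁ + k₂) := by
    have := hsum; linear_combination (norm := module) this
  have e1 : k₁ = -(k₂ + k₃) := by
    have := hsum; linear_combination (norm := module) this
  have e2 : k₂ = -(k₁ + k₃) := by
    have := hsum; linear_combination (norm := module) this
  have tc : c ≤ a + b := by
    rw [hc', e3, norm2_neg]; exact norm2_triangle _ _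
  have ta : a ≤ b + c := by
    rw [ha', e1, norm2_neg]; exact norm2_triangle _ _
  have tb : b ≤ a + c := by
    rw [hb', e2, norm2_neg]; exact norm2_triangle _ _
  set x := omg g k₁ with hx'
  set y := omg g k₂ with hy'
  set z := omg g k₃ with hz'
  have hx : 0 < x := Real.sqrt_pos.mpr (by positivity)
  have hy : 0 < y := Real.sqrt_pos.mpr (by positivity)
  have hz : 0 < z := Real.sqrt_pos.mpr (by positivity)
  have hx2 : x ^ 2 = g * a := Real.sq_sqrt (by positivity)
  have hy2 : y ^ 2 = g * b := Real.sq_sqrt (by positivity)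
  have hz2 : z ^ 2 = g * c := Real.sq_sqrt (by positivity)
  have hzxy : z ^ 2 ≤ x ^ 2 + y ^ 2 := by nlinarith
  have hxyz : x ^ 2 ≤ y ^ 2 + z ^ 2 := by nlinarith
  have hyxz : y ^ 2 ≤ x ^ 2 + z ^ 2 := by nlinarith
  have hP : 0 < (x + y + z) * (x + y - z) := by nlinarith [mul_pos hx hy]
  have hQ : (x - y + z) * (x - y - z) < 0 := by
    have key : (x - y) ^ 2 < z ^ 2 := by
      rcases eq_or_ne x y with h | h
      · rw [h]; have hz0 : z ≠ 0 := ne_of_gt hz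
        simpa using (by positivity : (0:ℝ) < z ^ 2)
      · have h1 : (0:ℝ) ≤ (y ^ 2 + z ^ 2 - x ^ 2) * (x ^ 2 + z ^ 2 - y ^ 2) :=
          mul_nonneg (by linarith) (by linarith)
        have h2 : (x - y) ^ 2 < (x + y) ^ 2 := by nlinarith [mul_pos hx hy]
        have hxy0 : x - y ≠ 0 := sub_ne_zero.mpr h
        have h3 : 0 < (x - y) ^ 2 := by positivity
        nlinarith [sq_nonneg ((x - y) ^ 2 - z ^ 2), sq_nonneg z]
    nlinarith
  calc (x + y + z) * (x + y - z) * (x - y + z) * (x - y - z)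
      = ((x + y + z) * (x + y - z)) * ((x - y + z) * (x - y - z)) := by ring
    _ < 0 := mul_neg_of_pos_of_neg hP hQ
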